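/- Let R be a commutative ring and let I_1, I_2, J_1, J_2 be ideals of R with I_1 ⊆ J_2 and I_2 ⊆ J_1. Then (I_1 + J_1) ∩ (I_2 + J_2) = I_1 + I_2 + (J_1 ∩ J_2). -/
import Mathlib

/-- The `l = 2` case of Niermann's lemma: if `I₁ ⊆ J₂` and `I₂ ⊆ J₁`, then
`(I₁ + J₁) ∩ (I₂ + J₂) = I₁ + I₂ + (J₁ ∩ J₂)`. -/
theorem niermann_lemma_two {R : Type*} [CommRing R]
    (I₁ I₂ J₁ J₂ : Ideal R) (h1 : I₁ ≤ J₂) (h2 : I₂ ≤ J₁) :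
    (I₁ + J₁) ⊓ (I₂ + J₂) = I₁ + I₂ + (J₁ ⊓ J₂) := by
  apply le_antisymm
  · rintro x ⟨hx1, hx2⟩
    obtain ⟨a₁, ha₁, b₁, hb₁, rfl⟩ := Submodule.mem_sup.mp hx1
    obtain ⟨a₂, ha₂, b₂, hb₂, hx⟩ := Submodule.mem_sup.mp hx2
    have key : a₁ + b₁ - a₁ - a₂ ∈ J₁ ⊓ J₂ := by
      constructor
      · have : a₁ + b₁ - a₁ - a₂ = b₁ - a₂ := by ring
        rw [this]
        exact sub_mem hb₁ (h2 ha₂)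
      · have : a₁ + b₁ - a₁ - a₂ = b₂ - a₁ := by rw [← hx]; ring
        rw [this]
        exact sub_mem hb₂ (h1 ha₁)
    have : a₁ + b₁ = a₁ + a₂ + (a₁ + b₁ - a₁ - a₂) := by ring
    rw [this]
    exact Submodule.add_mem _ (Submodule.add_mem _
      (Submodule.mem_sup_left (Submodule.mem_sup_left ha₁))
      (Submodule.mem_sup_left (Submodule.mem_sup_right ha₂)))
      (Submodule.mem_sup_right key)
  · refine sup_le (sup_le ?_ ?_) ?_
    · exact le_inf le_sup_left (le_trans h1 le_sup_right)
    · exact le_inf (le_trans h2 le_sup_right) le_sup_left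
    · exact le_inf (le_trans inf_le_left le_sup_right) (le_trans inf_le_right le_sup_right)
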